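/- Let 𝔤 be a finite-dimensional real Lie algebra and K : 𝔤 × 𝔤 → ℝ a Chevalley–Eilenberg 2-cocycle. For smooth functions f, g : 𝔤* → ℝ define {f,g}(α) := α([df_α, dg_α]) + K(df_α, dg_α), where df_α ∈ 𝔤 denotes the Fréchet derivative Df(α) ∈ (𝔤*)* transported to 𝔤 via the canonical evaluation isomorphism 𝔤 ≅ (𝔤*)*. Then {·,·} is a Poisson bracket on C^∞(𝔤*,ℝ): it is ℝ-bilinear, antisymmetric, satisfies the Leibniz rule {f, g·h} = {f,g}·h + g·{f,h}, and satisfies the Jacobi identity {f,{g,h}} + {g,{h,f}} + {h,{f,g}} = 0. -/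

import Mathlib

open Classical in
/-- The gradient of `f : 𝔤* → ℝ` at `α`: the Fréchet derivative `Df(α) ∈ (𝔤*)*`
transported to `𝔤` via the canonical evaluation identification, i.e. the (unique,
in finite dimensions) vector `v ∈ 𝔤` with `Df(α)(β) = β(v)` for all `β ∈ 𝔤*`. -/
noncomputable def kksGrad {L : Type*} [NormedAddCommGroup L] [NormedSpace ℝ L]
    (f : (L →L[ℝ] ℝ) → ℝ) (α : L →L[ℝ] ℝ) : L :=
  if h : ∃ v : L, ∀ β : L →L[ℝ] ℝ, fderiv ℝ f α β = β v then h.choose else 0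

/-- The Kirillov–Kostant–Souriau bracket (with cocycle `K`) of two functions on
`𝔤*`: `{f,g}(α) = α([df_α, dg_α]) + K(df_α, dg_α)`, for the Lie bracket `B`. -/
noncomputable def kksBracket {L : Type*} [NormedAddCommGroup L] [NormedSpace ℝ L]
    (B : L →ₗ[ℝ] L →ₗ[ℝ] L) (K : L →ₗ[ℝ] L →ₗ[ℝ] ℝ)
    (f g : (L →L[ℝ] ℝ) → ℝ) : (L →L[ℝ] ℝ) → ℝ :=
  fun α => α (B (kksGrad f α) (kksGrad g α)) + K (kksGrad f α) (kksGrad g α)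


open Module

section Aux
variable {L : Type*} [NormedAddCommGroup L] [NormedSpace ℝ L] [FiniteDimensional ℝ L]

lemma kks_sep {v w : L} (h : ∀ β : L →L[ℝ] ℝ, β v = β w) : v = w := by
  have h0 : ∀ φ : Module.Dual ℝ L, φ (v - w) = 0 := by
    intro φ
    have := h (LinearMap.toContinuousLinearMap φ)
    simp only [LinearMap.coe_toContinuousLinearMap'] at this
    simp [map_sub, this]
  exact sub_eq_zero.1 ((Module.forall_dual_apply_eq_zero_iff ℝ (v - w)).1 h0)

lemma kks_eval_bijective :
    Function.Bijective (ContinuousLinearMap.apply ℝ ℝ : L →L[ℝ] ((L →L[ℝ] ℝ) →L[ℝ] ℝ)) := by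
  have hinj : Function.Injective
      (ContinuousLinearMap.apply ℝ ℝ : L →L[ℝ] ((L →L[ℝ] ℝ) →L[ℝ] ℝ)) := by
    intro v w h
    exact kks_sep fun β => congrArg (fun ψ => ψ β) h
  refine ⟨hinj, ?_⟩
  have h1 : finrank ℝ (L →L[ℝ] ℝ) = finrank ℝ L := by
    rw [← (LinearMap.toContinuousLinearMap :
        (L →ₗ[ℝ] ℝ) ≃ₗ[ℝ] (L →L[ℝ] ℝ)).finrank_eq]
    exact Subspace.dual_finrank_eq
  have h2 : finrank ℝ ((L →L[ℝ] ℝ) →L[ℝ] ℝ) = finrank ℝ (L →L[ℝ] ℝ) := by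
    rw [← (LinearMap.toContinuousLinearMap :
        ((L →L[ℝ] ℝ) →ₗ[ℝ] ℝ) ≃ₗ[ℝ] ((L →L[ℝ] ℝ) →L[ℝ] ℝ)).finrank_eq]
    exact Subspace.dual_finrank_eq
  exact (LinearMap.injective_iff_surjective_of_finrank_eq_finrank
    (f := (ContinuousLinearMap.apply ℝ ℝ : L →L[ℝ] ((L →L[ℝ] ℝ) →L[ℝ] ℝ)).toLinearMap)
    (by rw [h2, h1])).1 hinj

noncomputable def kksIso : L ≃ₗ[ℝ] ((L →L[ℝ] ℝ) →L[ℝ] ℝ) :=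
  LinearEquiv.ofBijective
    (ContinuousLinearMap.apply ℝ ℝ : L →L[ℝ] ((L →L[ℝ] ℝ) →L[ℝ] ℝ)).toLinearMap
    kks_eval_bijective

@[simp] lemma kksIso_apply (v : L) (β : L →L[ℝ] ℝ) : kksIso v β = β v := rfl

@[simp] lemma kksIso_symm_apply (ψ : (L →L[ℝ] ℝ) →L[ℝ] ℝ) (β : L →L[ℝ] ℝ) :
    β (kksIso.symm ψ) = ψ β := by
  have : kksIso (kksIso.symm ψ) = ψ := kksIso.apply_symm_apply ψ
  conv_rhs => rw [← this]
  rfl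

noncomputable def kksIsoC : ((L →L[ℝ] ℝ) →L[ℝ] ℝ) →L[ℝ] L :=
  LinearMap.toContinuousLinearMap (E := (L →L[ℝ] ℝ) →L[ℝ] ℝ) (F' := L) kksIso.symm.toLinearMap

@[simp] lemma kksIsoC_apply (ψ : (L →L[ℝ] ℝ) →L[ℝ] ℝ) (β : L →L[ℝ] ℝ) :
    β (kksIsoC ψ) = ψ β := by
  show β (kksIso.symm ψ) = ψ β
  exact kksIso_symm_apply ψ β

lemma kksGrad_eq (f : (L →L[ℝ] ℝ) → ℝ) (α : L →L[ℝ] ℝ) :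
    kksGrad f α = kksIsoC (fderiv ℝ f α) := by
  have hex : ∃ v : L, ∀ β : L →L[ℝ] ℝ, fderiv ℝ f α β = β v :=
    ⟨kksIsoC (fderiv ℝ f α), fun β => (kksIsoC_apply _ β).symm⟩
  rw [kksGrad, dif_pos hex]
  exact kks_sep fun β => by rw [← hex.choose_spec β, kksIsoC_apply]

lemma kksGrad_spec (f : (L →L[ℝ] ℝ) → ℝ) (α β : L →L[ℝ] ℝ) :
    fderiv ℝ f α β = β (kksGrad f α) := by
  rw [kksGrad_eq, kksIsoC_apply]

lemma kksGrad_unique {f : (L →L[ℝ] ℝ) → ℝ} {α : L →L[ℝ] ℝ} {v : L}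
    (h : ∀ β : L →L[ℝ] ℝ, fderiv ℝ f α β = β v) : kksGrad f α = v :=
  kks_sep fun β => by rw [← kksGrad_spec, h]

lemma kksGrad_contDiff {f : (L →L[ℝ] ℝ) → ℝ} (hf : ContDiff ℝ (⊤ : ℕ∞) f) :
    ContDiff ℝ (⊤ : ℕ∞) (fun α => kksGrad f α) := by
  have : (fun α => kksGrad f α) = fun α => kksIsoC (fderiv ℝ f α) :=
    funext fun α => kksGrad_eq f α
  rw [this]
  exact kksIsoC.contDiff.comp (hf.fderiv_right (m := (⊤:ℕ∞)) (by simp))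

lemma kksGrad_hasFDerivAt {f : (L →L[ℝ] ℝ) → ℝ} (hf : ContDiff ℝ (⊤ : ℕ∞) f)
    (α : L →L[ℝ] ℝ) :
    HasFDerivAt (fun α => kksGrad f α)
      (kksIsoC.comp (fderiv ℝ (fderiv ℝ f) α)) α := by
  have hd : HasFDerivAt (fderiv ℝ f) (fderiv ℝ (fderiv ℝ f) α) α :=
    (((hf.fderiv_right (m := (⊤:ℕ∞)) (by simp)).differentiable (by simp)) α).hasFDerivAt
  have := kksIsoC.hasFDerivAt.comp (𝕜 := ℝ) (F := (L →L[ℝ] ℝ) →L[ℝ] ℝ) α hd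
  have heq : (fun α => kksGrad f α) = ⇑kksIsoC ∘ fderiv ℝ f :=
    funext fun α => kksGrad_eq f α
  rw [heq]
  exact this

lemma kksGrad_fderiv_apply {f : (L →L[ℝ] ℝ) → ℝ} (hf : ContDiff ℝ (⊤ : ℕ∞) f)
    (α β γ : L →L[ℝ] ℝ) :
    γ (fderiv ℝ (fun α => kksGrad f α) α β) = fderiv ℝ (fderiv ℝ f) α β γ := by
  rw [(kksGrad_hasFDerivAt hf α).fderiv]
  simp

end Aux

section Aux2
variable {L : Type*} [NormedAddCommGroup L] [NormedSpace ℝ L] [FiniteDimensional ℝ L]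

noncomputable def kksCLM2 {M : Type*} [NormedAddCommGroup M] [NormedSpace ℝ M]
    (B : L →ₗ[ℝ] L →ₗ[ℝ] M) : L →L[ℝ] L →L[ℝ] M :=
  LinearMap.toContinuousLinearMap
    ((LinearMap.toContinuousLinearMap : (L →ₗ[ℝ] M) ≃ₗ[ℝ] (L →L[ℝ] M)).toLinearMap.comp B)

@[simp] lemma kksCLM2_apply {M : Type*} [NormedAddCommGroup M] [NormedSpace ℝ M]
    (B : L →ₗ[ℝ] L →ₗ[ℝ] M) (x y : L) : kksCLM2 B x y = B x y := rfl

lemma kksBracket_eq (B : L →ₗ[ℝ] L →ₗ[ℝ] L) (K : L →ₗ[ℝ] L →ₗ[ℝ] ℝ)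
    (f g : (L →L[ℝ] ℝ) → ℝ) :
    kksBracket B K f g = fun α =>
      α (kksCLM2 B (kksGrad f α) (kksGrad g α)) + kksCLM2 K (kksGrad f α) (kksGrad g α) :=
  rfl

lemma kksBracket_contDiff (B : L →ₗ[ℝ] L →ₗ[ℝ] L) (K : L →ₗ[ℝ] L →ₗ[ℝ] ℝ)
    {f g : (L →L[ℝ] ℝ) → ℝ} (hf : ContDiff ℝ (⊤ : ℕ∞) f) (hg : ContDiff ℝ (⊤ : ℕ∞) g) :
    ContDiff ℝ (⊤ : ℕ∞) (kksBracket B K f g) := by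
  have hF := kksGrad_contDiff hf
  have hG := kksGrad_contDiff hg
  rw [kksBracket_eq]
  have h1 : ContDiff ℝ (⊤ : ℕ∞) (fun α => kksCLM2 B (kksGrad f α) (kksGrad g α)) :=
    (((kksCLM2 B).contDiff).comp hF).clm_apply hG
  have h2 : ContDiff ℝ (⊤ : ℕ∞) (fun α => kksCLM2 K (kksGrad f α) (kksGrad g α)) :=
    (((kksCLM2 K).contDiff).comp hF).clm_apply hG
  exact (contDiff_id.clm_apply h1).add h2

lemma kksBracket_hasFDerivAt (B : L →ₗ[ℝ] L →ₗ[ℝ] L) (K : L →ₗ[ℝ] L →ₗ[ℝ] ℝ)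
    {g h : (L →L[ℝ] ℝ) → ℝ} (hg : ContDiff ℝ (⊤ : ℕ∞) g) (hh : ContDiff ℝ (⊤ : ℕ∞) h)
    (α β : L →L[ℝ] ℝ) :
    fderiv ℝ (kksBracket B K g h) α β =
      β (B (kksGrad g α) (kksGrad h α))
      + (α (B (fderiv ℝ (fun α => kksGrad g α) α β) (kksGrad h α))
          + K (fderiv ℝ (fun α => kksGrad g α) α β) (kksGrad h α))
      + (α (B (kksGrad g α) (fderiv ℝ (fun α => kksGrad h α) α β))
          + K (kksGrad g α) (fderiv ℝ (fun α => kksGrad h α) α β)) := by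
  have hX : HasFDerivAt (fun α => kksGrad g α) (fderiv ℝ (fun α => kksGrad g α) α) α :=
    ((kksGrad_contDiff hg).differentiable (by simp) α).hasFDerivAt
  have hY : HasFDerivAt (fun α => kksGrad h α) (fderiv ℝ (fun α => kksGrad h α) α) α :=
    ((kksGrad_contDiff hh).differentiable (by simp) α).hasFDerivAt
  have h1 : HasFDerivAt (fun α => kksCLM2 B (kksGrad g α))
      ((kksCLM2 B).comp (fderiv ℝ (fun α => kksGrad g α) α)) α :=
    (kksCLM2 B).hasFDerivAt.comp α hX
  have h2 := h1.clm_apply hY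
  have h3 := (hasFDerivAt_id α).clm_apply h2
  have h4 : HasFDerivAt (fun α => kksCLM2 K (kksGrad g α))
      ((kksCLM2 K).comp (fderiv ℝ (fun α => kksGrad g α) α)) α :=
    (kksCLM2 K).hasFDerivAt.comp α hX
  have h5 := h4.clm_apply hY
  have h6 := h3.add h5
  have h6' : HasFDerivAt (fun α : L →L[ℝ] ℝ => α (kksCLM2 B (kksGrad g α) (kksGrad h α)) + kksCLM2 K (kksGrad g α) (kksGrad h α)) _ α := h6
  rw [kksBracket_eq]
  rw [h6'.fderiv]
  simp [ContinuousLinearMap.comp_apply, ContinuousLinearMap.flip_apply,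
    ContinuousLinearMap.add_apply, map_add]
  ring

end Aux2

lemma kks_skew {L M : Type*} [AddCommGroup L] [Module ℝ L] [AddCommGroup M] [Module ℝ M]
    (B : L →ₗ[ℝ] L →ₗ[ℝ] M) (halt : ∀ x, B x x = 0) (x y : L) : B x y = -B y x := by
  have h : B x y + B y x = 0 := by
    have := halt (x + y)
    have h2 := this
    simp only [map_add, LinearMap.add_apply, halt x, halt y] at h2
    rw [zero_add, add_zero] at h2
    rw [add_comm] at h2
    exact h2
  exact eq_neg_of_add_eq_zero_left h

section Aux3
variable {L : Type*} [NormedAddCommGroup L] [NormedSpace ℝ L] [FiniteDimensional ℝ L]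

noncomputable def kksCov (B : L →ₗ[ℝ] L →ₗ[ℝ] L) (K : L →ₗ[ℝ] L →ₗ[ℝ] ℝ)
    (f : (L →L[ℝ] ℝ) → ℝ) (α : L →L[ℝ] ℝ) : L →L[ℝ] ℝ :=
  LinearMap.toContinuousLinearMap
    ((α : L →ₗ[ℝ] ℝ).comp (B (kksGrad f α)) + K (kksGrad f α))

@[simp] lemma kksCov_apply (B : L →ₗ[ℝ] L →ₗ[ℝ] L) (K : L →ₗ[ℝ] L →ₗ[ℝ] ℝ)
    (f : (L →L[ℝ] ℝ) → ℝ) (α : L →L[ℝ] ℝ) (x : L) :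
    kksCov B K f α x = α (B (kksGrad f α) x) + K (kksGrad f α) x := by
  simp [kksCov]

lemma kks_jacobi_term (B : L →ₗ[ℝ] L →ₗ[ℝ] L) (hBalt : ∀ x : L, B x x = 0)
    (K : L →ₗ[ℝ] L →ₗ[ℝ] ℝ) (hKalt : ∀ x : L, K x x = 0)
    {f g h : (L →L[ℝ] ℝ) → ℝ}
    (hg : ContDiff ℝ (⊤ : ℕ∞) g) (hh : ContDiff ℝ (⊤ : ℕ∞) h) (α : L →L[ℝ] ℝ) :
    kksBracket B K f (kksBracket B K g h) α =
      (α (B (kksGrad f α) (B (kksGrad g α) (kksGrad h α)))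
        + K (kksGrad f α) (B (kksGrad g α) (kksGrad h α)))
      - fderiv ℝ (fderiv ℝ g) α (kksCov B K f α) (kksCov B K h α)
      + fderiv ℝ (fderiv ℝ h) α (kksCov B K f α) (kksCov B K g α) := by
  have key : kksBracket B K f (kksBracket B K g h) α
      = fderiv ℝ (kksBracket B K g h) α (kksCov B K f α) := by
    rw [kksGrad_spec (kksBracket B K g h) α (kksCov B K f α)]
    simp [kksBracket]
  rw [key, kksBracket_hasFDerivAt B K hg hh α (kksCov B K f α)]
  set u := fderiv ℝ (fun α => kksGrad g α) α (kksCov B K f α) with hu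
  set w := fderiv ℝ (fun α => kksGrad h α) α (kksCov B K f α) with hw
  have e1 : (kksCov B K f α) (B (kksGrad g α) (kksGrad h α))
      = α (B (kksGrad f α) (B (kksGrad g α) (kksGrad h α)))
        + K (kksGrad f α) (B (kksGrad g α) (kksGrad h α)) := by simp
  have e2' : (kksCov B K h α) u = fderiv ℝ (fderiv ℝ g) α (kksCov B K f α) (kksCov B K h α) := by
    rw [hu]; exact kksGrad_fderiv_apply hg α (kksCov B K f α) (kksCov B K h α)
  have e2 : α (B u (kksGrad h α)) + K u (kksGrad h α)
      = -(fderiv ℝ (fderiv ℝ g) α (kksCov B K f α) (kksCov B K h α)) := by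
    rw [kks_skew B hBalt u (kksGrad h α), kks_skew K hKalt u (kksGrad h α),
      map_neg, ← e2']
    simp only [kksCov_apply]
    ring
  have e3 : α (B (kksGrad g α) w) + K (kksGrad g α) w
      = fderiv ℝ (fderiv ℝ h) α (kksCov B K f α) (kksCov B K g α) := by
    have e3' : (kksCov B K g α) w
        = fderiv ℝ (fderiv ℝ h) α (kksCov B K f α) (kksCov B K g α) := by
      rw [hw]; exact kksGrad_fderiv_apply hh α (kksCov B K f α) (kksCov B K g α)
    rw [← e3']
    simp only [kksCov_apply]
  rw [e1, e2, e3]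
  ring

end Aux3


/-- For a finite-dimensional real Lie algebra `(L, B)` and a Chevalley–Eilenberg
2-cocycle `K`, the KKS bracket is a Poisson bracket on `C^∞(𝔤*, ℝ)`: it preserves
smoothness, is `ℝ`-bilinear, antisymmetric, satisfies the Leibniz rule and the
Jacobi identity. -/
theorem kks_isPoissonBracket {L : Type*} [NormedAddCommGroup L] [NormedSpace ℝ L]
    [FiniteDimensional ℝ L]
    (B : L →ₗ[ℝ] L →ₗ[ℝ] L)
    (hBalt : ∀ x : L, B x x = 0)
    (hBjacobi : ∀ x y z : L, B (B x y) z + B (B y z) x + B (B z x) y = 0)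
    (K : L →ₗ[ℝ] L →ₗ[ℝ] ℝ)
    (hKalt : ∀ x : L, K x x = 0)
    (hKcocycle : ∀ x y z : L, K (B x y) z + K (B y z) x + K (B z x) y = 0) :
    -- the bracket of smooth functions is smooth
    (∀ f g : (L →L[ℝ] ℝ) → ℝ, ContDiff ℝ (⊤ : ℕ∞) f → ContDiff ℝ (⊤ : ℕ∞) g →
        ContDiff ℝ (⊤ : ℕ∞) (kksBracket B K f g)) ∧
    -- ℝ-linearity in the first argument
    (∀ f f' g : (L →L[ℝ] ℝ) → ℝ, ∀ c : ℝ, ContDiff ℝ (⊤ : ℕ∞) f →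
        ContDiff ℝ (⊤ : ℕ∞) f' → ContDiff ℝ (⊤ : ℕ∞) g →
        kksBracket B K (c • f + f') g = c • kksBracket B K f g + kksBracket B K f' g) ∧
    -- ℝ-linearity in the second argument
    (∀ f g g' : (L →L[ℝ] ℝ) → ℝ, ∀ c : ℝ, ContDiff ℝ (⊤ : ℕ∞) f →
        ContDiff ℝ (⊤ : ℕ∞) g → ContDiff ℝ (⊤ : ℕ∞) g' →
        kksBracket B K f (c • g + g') = c • kksBracket B K f g + kksBracket B K f g') ∧
    -- antisymmetry
    (∀ f g : (L →L[ℝ] ℝ) → ℝ, ContDiff ℝ (⊤ : ℕ∞) f → ContDiff ℝ (⊤ : ℕ∞) g →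
        kksBracket B K f g = -kksBracket B K g f) ∧
    -- Leibniz rule
    (∀ f g h : (L →L[ℝ] ℝ) → ℝ, ContDiff ℝ (⊤ : ℕ∞) f → ContDiff ℝ (⊤ : ℕ∞) g →
        ContDiff ℝ (⊤ : ℕ∞) h →
        kksBracket B K f (g * h) = kksBracket B K f g * h + g * kksBracket B K f h) ∧
    -- Jacobi identity
    (∀ f g h : (L →L[ℝ] ℝ) → ℝ, ContDiff ℝ (⊤ : ℕ∞) f → ContDiff ℝ (⊤ : ℕ∞) g →
        ContDiff ℝ (⊤ : ℕ∞) h →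
        kksBracket B K f (kksBracket B K g h) + kksBracket B K g (kksBracket B K h f) +
          kksBracket B K h (kksBracket B K f g) = 0) := by
  refine ⟨fun f g hf hg => kksBracket_contDiff B K hf hg, ?_, ?_, ?_, ?_, ?_⟩
  · -- linearity in the first argument
    intro f f' g c hf hf' hg
    funext α
    have hdf : DifferentiableAt ℝ f α := (hf.differentiable (by simp)) α
    have hdf' : DifferentiableAt ℝ f' α := (hf'.differentiable (by simp)) α
    have hgrad : kksGrad (c • f + f') α = c • kksGrad f α + kksGrad f' α := by
      apply kksGrad_unique
      intro β
      have hD : fderiv ℝ (c • f + f') α = c • fderiv ℝ f α + fderiv ℝ f' α := by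
        have h1 : (c • f + f') = fun y => c • f y + f' y := rfl
        rw [h1, fderiv_fun_add (f := fun y => c • f y) (hdf.const_smul c) hdf', fderiv_fun_const_smul hdf c]
      rw [hD]
      calc (c • fderiv ℝ f α + fderiv ℝ f' α) β
          = c * fderiv ℝ f α β + fderiv ℝ f' α β := by simp
        _ = c * β (kksGrad f α) + β (kksGrad f' α) := by
            rw [kksGrad_spec f α β, kksGrad_spec f' α β]
        _ = β (c • kksGrad f α + kksGrad f' α) := by simp
    simp only [Pi.add_apply, Pi.smul_apply, smul_eq_mul, kksBracket, hgrad, map_add,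
      map_smul, LinearMap.add_apply, LinearMap.smul_apply]
    ring
  · -- linearity in the second argument
    intro f g g' c hf hg hg'
    funext α
    have hdg : DifferentiableAt ℝ g α := (hg.differentiable (by simp)) α
    have hdg' : DifferentiableAt ℝ g' α := (hg'.differentiable (by simp)) α
    have hgrad : kksGrad (c • g + g') α = c • kksGrad g α + kksGrad g' α := by
      apply kksGrad_unique
      intro β
      have hD : fderiv ℝ (c • g + g') α = c • fderiv ℝ g α + fderiv ℝ g' α := by
        have h1 : (c • g + g') = fun y => c • g y + g' y := rfl
        rw [h1, fderiv_fun_add (f := fun y => c • g y) (hdg.const_smul c) hdg', fderiv_fun_const_smul hdg c]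
      rw [hD]
      calc (c • fderiv ℝ g α + fderiv ℝ g' α) β
          = c * fderiv ℝ g α β + fderiv ℝ g' α β := by simp
        _ = c * β (kksGrad g α) + β (kksGrad g' α) := by
            rw [kksGrad_spec g α β, kksGrad_spec g' α β]
        _ = β (c • kksGrad g α + kksGrad g' α) := by simp
    simp only [Pi.add_apply, Pi.smul_apply, smul_eq_mul, kksBracket, hgrad, map_add,
      map_smul, LinearMap.add_apply, LinearMap.smul_apply]
    ring
  · -- antisymmetry
    intro f g hf hg
    funext α
    simp only [Pi.neg_apply, kksBracket]
    rw [kks_skew B hBalt (kksGrad f α) (kksGrad g α),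
      kks_skew K hKalt (kksGrad f α) (kksGrad g α), map_neg]
    ring
  · -- Leibniz
    intro f g h hf hg hh
    funext α
    have hdg : DifferentiableAt ℝ g α := (hg.differentiable (by simp)) α
    have hdh : DifferentiableAt ℝ h α := (hh.differentiable (by simp)) α
    have hgrad : kksGrad (g * h) α = g α • kksGrad h α + h α • kksGrad g α := by
      apply kksGrad_unique
      intro β
      have hD : fderiv ℝ (g * h) α = g α • fderiv ℝ h α + h α • fderiv ℝ g α := by
        have h1 : (g * h) = fun y => g y * h y := rfl
        rw [h1, fderiv_fun_mul hdg hdh]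
      rw [hD]
      calc (g α • fderiv ℝ h α + h α • fderiv ℝ g α) β
          = g α * fderiv ℝ h α β + h α * fderiv ℝ g α β := by simp
        _ = g α * β (kksGrad h α) + h α * β (kksGrad g α) := by
            rw [kksGrad_spec h α β, kksGrad_spec g α β]
        _ = β (g α • kksGrad h α + h α • kksGrad g α) := by simp
    simp only [Pi.add_apply, Pi.mul_apply, kksBracket, hgrad, map_add, map_smul,
      LinearMap.add_apply, LinearMap.smul_apply, smul_eq_mul]
    ring
  · -- Jacobi
    intro f g h hf hg hh
    funext α
    simp only [Pi.add_apply, Pi.zero_apply]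
    rw [kks_jacobi_term B hBalt K hKalt hg hh α,
      kks_jacobi_term B hBalt K hKalt hh hf α,
      kks_jacobi_term B hBalt K hKalt hf hg α]
    have hsym : ∀ p : (L →L[ℝ] ℝ) → ℝ, ContDiff ℝ (⊤ : ℕ∞) p →
        ∀ u w : L →L[ℝ] ℝ,
          fderiv ℝ (fderiv ℝ p) α u w = fderiv ℝ (fderiv ℝ p) α w u := by
      intro p hp u w
      exact second_derivative_symmetric
        (fun y => ((hp.differentiable (by simp)) y).hasFDerivAt)
        (((hp.fderiv_right (m := (⊤ : ℕ∞)) (by simp)).differentiable (by simp) α).hasFDerivAt)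
        u w
    have hB0 : α (B (kksGrad f α) (B (kksGrad g α) (kksGrad h α)))
        + α (B (kksGrad g α) (B (kksGrad h α) (kksGrad f α)))
        + α (B (kksGrad h α) (B (kksGrad f α) (kksGrad g α))) = 0 := by
      rw [kks_skew B hBalt (kksGrad f α) (B (kksGrad g α) (kksGrad h α)),
        kks_skew B hBalt (kksGrad g α) (B (kksGrad h α) (kksGrad f α)),
        kks_skew B hBalt (kksGrad h α) (B (kksGrad f α) (kksGrad g α))]
      simp only [map_neg]
      have h0 : α (B (B (kksGrad g α) (kksGrad h α)) (kksGrad f α))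
          + α (B (B (kksGrad h α) (kksGrad f α)) (kksGrad g α))
          + α (B (B (kksGrad f α) (kksGrad g α)) (kksGrad h α)) = 0 := by
        rw [← map_add, ← map_add, hBjacobi (kksGrad g α) (kksGrad h α) (kksGrad f α),
          map_zero]
      linarith
    have hK0 : K (kksGrad f α) (B (kksGrad g α) (kksGrad h α))
        + K (kksGrad g α) (B (kksGrad h α) (kksGrad f α))
        + K (kksGrad h α) (B (kksGrad f α) (kksGrad g α)) = 0 := by
      rw [kks_skew K hKalt (kksGrad f α) (B (kksGrad g α) (kksGrad h α)),
        kks_skew K hKalt (kksGrad g α) (B (kksGrad h α) (kksGrad f α)),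
        kks_skew K hKalt (kksGrad h α) (B (kksGrad f α) (kksGrad g α))]
      linarith [hKcocycle (kksGrad g α) (kksGrad h α) (kksGrad f α)]
    linarith [hsym g hg (kksCov B K f α) (kksCov B K h α),
      hsym h hh (kksCov B K f α) (kksCov B K g α),
      hsym f hf (kksCov B K g α) (kksCov B K h α),
      hsym h hh (kksCov B K g α) (kksCov B K f α),
      hsym f hf (kksCov B K h α) (kksCov B K g α),
      hsym g hg (kksCov B K h α) (kksCov B K f α), hB0, hK0]
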